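/- arXiv:2504.12707 — 3 statements merged into one kernel-verified Lean document; each statement's English description precedes it below -/
import Mathlib

section
/- Let H be a finitely generated group with a surjection π from the free group on a finite set Y onto H, equipped with a computable left order ≤, and let φ : G → H be an injective homomorphism from a countable group G such that the membership problem for φ(G) in H is decidable. Then there is an enumerated generating sequence x : ℕ → G of G such that the left-invariant linear order on G obtained by pulling back ≤ along φ (i.e., a <_G b iff φ(a) < φ(b)) is computable with respect to x. -/
-- The sign (−1, 0, or 1) of a group element relative to the identity,
-- with respect to a linear order `l`.
open Classical in
noncomputable def orderSign {H : Type*} [Group H] (l : LinearOrder H) (h : H) : ℤ :=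
  if l.lt h 1 then -1 else if h = 1 then 0 else 1

/-- A group is left-orderable if it carries a left-invariant linear order. -/
def IsLeftOrderable (G : Type*) [Group G] : Prop :=
  ∃ l : LinearOrder G, ∀ a b c : G, l.le b c → l.le (a * b) (a * c)

/-- A Frattini embedding: an injective homomorphism preserving and reflecting conjugacy. -/
def IsFrattini {G H : Type*} [Group G] [Group H] (φ : G →* H) : Prop :=
  Function.Injective φ ∧ ∀ a b : G, IsConj a b ↔ IsConj (φ a) (φ b)

/-- `X` is a (finite) generating set of the group. -/
def Generates {G : Type*} [Group G] (X : Finset G) : Prop :=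
  Subgroup.closure (X : Set G) = ⊤

/-- Word length of `g` with respect to the finite set `X`: the least length of a word
over `X ∪ X⁻¹` representing `g`. -/
noncomputable def wordLength {G : Type*} [Group G] (X : Finset G) (g : G) : ℕ :=
  sInf {n | ∃ w : List G, w.length = n ∧ (∀ a ∈ w, a ∈ X ∨ a⁻¹ ∈ X) ∧ w.prod = g}

/-- Quasi-isometric embedding with respect to finite generating sets `X` and `Y`. -/
noncomputable def IsQIEmbedding {G H : Type*} [Group G] [Group H]
    (X : Finset G) (Y : Finset H) (φ : G →* H) : Prop :=
  Function.Injective φ ∧ ∃ C k : ℝ, 0 < C ∧ 0 < k ∧ ∀ g : G,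
    (1 / C) * (wordLength X g : ℝ) - k ≤ (wordLength Y (φ g) : ℝ) ∧
    (wordLength Y (φ g) : ℝ) ≤ C * (wordLength X g : ℝ) + k

/-- Evaluation of a formal word (list of pairs (index, sign)) over the
enumerated sequence `x : ℕ → G`. -/
def evalWord {G : Type*} [Group G] (x : ℕ → G) (w : List (ℕ × Bool)) : G :=
  (w.map (fun p => if p.2 then x p.1 else (x p.1)⁻¹)).prod

/-- A computable left order on a countable group with respect to an enumerated
generating sequence `x : ℕ → G`. -/
def ComputableLeftOrderWrt {G : Type*} [Group G] (x : ℕ → G) : Prop :=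
  ∃ l : LinearOrder G, (∀ a b c : G, l.le b c → l.le (a * b) (a * c)) ∧
    Computable (fun w : List (ℕ × Bool) => orderSign l (evalWord x w))

/-- A computable left order on a finitely generated group, presented by
a surjection `π` from a free group of finite rank. -/
def ComputableLeftOrderVia {H : Type*} [Group H] {m : ℕ}
    (π : FreeGroup (Fin m) →* H) : Prop :=
  ∃ l : LinearOrder H, (∀ a b c : H, l.le b c → l.le (a * b) (a * c)) ∧
    Computable (fun w : List (Fin m × Bool) => orderSign l (π (FreeGroup.mk w)))

/-- The embedding `φ` is computable: one can compute, for each `i`, a word over the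
generators of `H` representing `φ (x i)`. -/
def ComputableEmbedding {G H : Type*} [Group G] [Group H] (x : ℕ → G) {m : ℕ}
    (π : FreeGroup (Fin m) →* H) (φ : G →* H) : Prop :=
  ∃ f : ℕ → List (Fin m × Bool), Computable f ∧ ∀ i, π (FreeGroup.mk (f i)) = φ (x i)

/-- Decidable membership problem for the image of `φ` in `H`, presented via `π`. -/
def DecidableMembership {G H : Type*} [Group G] [Group H] {m : ℕ}
    (π : FreeGroup (Fin m) →* H) (φ : G →* H) : Prop :=
  ComputablePred (fun w : List (Fin m × Bool) => π (FreeGroup.mk w) ∈ φ.range)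

/-- Decidable word problem for `H`, presented via `π`. -/
def DecidableWordProblemVia {H : Type*} [Group H] {m : ℕ}
    (π : FreeGroup (Fin m) →* H) : Prop :=
  ComputablePred (fun w : List (Fin m × Bool) => π (FreeGroup.mk w) = 1)

/-- A group is finitely presented: quotient of a finite-rank free group by the
normal closure of finitely many relators. -/
def IsFinitelyPresented (K : Type*) [Group K] : Prop :=
  ∃ (m : ℕ) (π : FreeGroup (Fin m) →* K) (R : Finset (FreeGroup (Fin m))),
    Function.Surjective π ∧ π.ker = Subgroup.normalClosure (R : Set (FreeGroup (Fin m)))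
theorem computable_list_map' {α β : Type*} [Primcodable α] [Primcodable β]
    {f : α → β} (hf : Computable f) : Computable fun l : List α => l.map f := by
  have key : ∀ (l : List α) (n : ℕ),
      Nat.rec (motive := fun _ => List β) []
        (fun k acc => acc ++ ((l[k]?).map f).toList) n = (l.take n).map f := by
    intro l n
    induction n with
    | zero => simp
    | succ k ih =>
      simp only [ih]
      rcases lt_or_ge k l.length with h | h
      · rw [List.take_succ, List.map_append,
          List.getElem?_eq_getElem h]
        simp
      · rw [List.getElem?_eq_none h]
        simp [List.take_of_length_le h, List.take_of_length_le (Nat.le_succ_of_le h)]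
  have H : Computable fun l : List α =>
      Nat.rec (motive := fun _ => List β) []
        (fun k acc => acc ++ ((l[k]?).map f).toList) l.length :=
    Computable.nat_rec Computable.list_length (Computable.const [])
      ((Computable.list_append.comp (Computable.snd.comp Computable.snd)
        (Primrec.optionToList.to_comp.comp
          (Computable.option_map
            (Computable.list_getElem?.comp Computable.fst (Computable.fst.comp Computable.snd))
            (hf.comp Computable.snd).to₂))).to₂)
  exact H.of_eq fun l => by rw [key, List.take_length]

theorem pullback_order_computable_of_decidable_membership
    (H : Type) [Group H] (m : ℕ) (π : FreeGroup (Fin m) →* H)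
    (hπ : Function.Surjective π) (l : LinearOrder H)
    (hl : ∀ a b c : H, l.le b c → l.le (a * b) (a * c))
    (hlc : Computable (fun w : List (Fin m × Bool) => orderSign l (π (FreeGroup.mk w))))
    (G : Type) [Group G] [Countable G] (φ : G →* H) (hφ : Function.Injective φ)
    (hmem : DecidableMembership π φ) :
    ∃ x : ℕ → G, Subgroup.closure (Set.range x) = ⊤ ∧
      ∃ lG : LinearOrder G,
        (∀ a b : G, lG.le a b ↔ l.le (φ a) (φ b)) ∧
        Computable (fun w : List (ℕ × Bool) => orderSign lG (evalWord x w)) := by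
  classical
  obtain ⟨D, hDc⟩ := hmem
  -- enumeration of all words
  let e : ℕ → List (Fin m × Bool) := fun n => (Encodable.decode n).getD []
  have he : Computable e :=
    Computable.option_getD Computable.decode (Computable.const [])
  -- the word chosen at stage n : e n if its image lies in φ.range, else the empty word
  let u : ℕ → List (Fin m × Bool) := fun n =>
    cond (@decide (π (FreeGroup.mk (e n)) ∈ φ.range) (D (e n))) (e n) []
  have hu : Computable u :=
    Computable.cond (hDc.comp he) he (Computable.const [])
  have hurange : ∀ n, π (FreeGroup.mk (u n)) ∈ φ.range := by
    intro n
    show π (FreeGroup.mk (cond _ _ _)) ∈ φ.range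
    rcases Bool.eq_false_or_eq_true (@decide (π (FreeGroup.mk (e n)) ∈ φ.range) (D (e n)))
      with h | h
    · rw [h]
      exact of_decide_eq_true h
    · rw [h]
      show π (FreeGroup.mk []) ∈ φ.range
      rw [← FreeGroup.one_eq_mk, map_one]
      exact ⟨1, map_one φ⟩
  -- the generating sequence
  let x : ℕ → G := fun n => (hurange n).choose
  have hxs : ∀ n, φ (x n) = π (FreeGroup.mk (u n)) := fun n => (hurange n).choose_spec
  have hxsurj : Function.Surjective x := by
    intro g
    obtain ⟨a, ha⟩ := hπ (φ g)
    refine ⟨Encodable.encode a.toWord, ?_⟩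
    have he' : e (Encodable.encode a.toWord) = a.toWord := by
      simp [e, Encodable.encodek]
    have hmemw : π (FreeGroup.mk (e (Encodable.encode a.toWord))) ∈ φ.range := by
      rw [he', FreeGroup.mk_toWord, ha]; exact ⟨g, rfl⟩
    have hun : u (Encodable.encode a.toWord) = a.toWord := by
      show cond _ _ _ = _
      rw [decide_eq_true hmemw]; simpa using he'
    apply hφ
    rw [hxs, hun, FreeGroup.mk_toWord, ha]
  refine ⟨x, ?_, ?_⟩
  · rw [Set.range_eq_univ.mpr hxsurj]; exact Subgroup.closure_univ
  · letI := l
    refine ⟨LinearOrder.lift' φ hφ, fun a b => Iff.rfl, ?_⟩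
    set lG := LinearOrder.lift' φ hφ with hlG
    have hsign : ∀ g : G, orderSign lG g = orderSign l (φ g) := by
      intro g
      have h1 : lG.lt g 1 ↔ l.lt (φ g) 1 := by
        rw [← map_one φ]; exact Iff.rfl
      have h2 : (g = 1) ↔ (φ g = 1) := by
        constructor
        · rintro rfl; exact map_one φ
        · intro h; apply hφ; rw [h, map_one]
      simp only [orderSign, h1, h2]
    -- the translation of words
    let block : ℕ × Bool → List (Fin m × Bool) := fun p =>
      cond p.2 (u p.1) (FreeGroup.invRev (u p.1))
    have hinvRev : Computable (FreeGroup.invRev : List (Fin m × Bool) → List (Fin m × Bool)) := by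
      have h1 : Primrec fun L : List (Fin m × Bool) =>
          (L.map fun q : Fin m × Bool => (q.1, !q.2)).reverse :=
        Primrec.list_reverse.comp (Primrec.list_map Primrec.id
          ((Primrec.fst.comp Primrec.snd).pair
            ((Primrec.dom_bool not).comp (Primrec.snd.comp Primrec.snd))))
      exact h1.to_comp.of_eq fun L => by simp [FreeGroup.invRev]
    have hblock : Computable block :=
      Computable.cond Computable.snd (hu.comp Computable.fst)
        (hinvRev.comp (hu.comp Computable.fst))
    let F : List (ℕ × Bool) → List (Fin m × Bool) := fun w => (w.map block).flatten
    have hF : Computable F :=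
      Primrec.list_flatten.to_comp.comp (computable_list_map' hblock)
    have hblockval : ∀ p : ℕ × Bool,
        π (FreeGroup.mk (block p)) = φ (if p.2 then x p.1 else (x p.1)⁻¹) := by
      rintro ⟨i, b⟩
      cases b
      · show π (FreeGroup.mk (FreeGroup.invRev (u i))) = φ (x i)⁻¹
        rw [← FreeGroup.inv_mk, map_inv, ← hxs, ← map_inv]
      · show π (FreeGroup.mk (u i)) = φ (x i)
        rw [hxs]
    have hkey : ∀ w : List (ℕ × Bool), φ (evalWord x w) = π (FreeGroup.mk (F w)) := by
      intro w
      induction w with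
      | nil =>
        show φ 1 = π (FreeGroup.mk (F []))
        have : F [] = [] := rfl
        rw [this, ← FreeGroup.one_eq_mk, map_one, map_one]
      | cons p t ih =>
        have : F (p :: t) = block p ++ F t := by simp [F]
        rw [this, ← FreeGroup.mul_mk, map_mul]
        have : evalWord x (p :: t)
            = (if p.2 then x p.1 else (x p.1)⁻¹) * evalWord x t := by
          simp [evalWord]
        rw [this, map_mul, ih, hblockval]
    exact (hlc.comp hF).of_eq fun w => by rw [hsign, hkey]
end

section
/- For every countable family (G_i)_{i∈ℕ} of finitely generated left-orderable groups there exists a left-orderable group H̃ generated by two elements such that every G_i admits an embedding into H̃ that is simultaneously quasi-isometric and Frattini. -/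
section WordLength

variable {G : Type*} [Group G] {X : Finset G}

lemma wordLength_le {g : G} {w : List G} (hw : ∀ a ∈ w, a ∈ X ∨ a⁻¹ ∈ X)
    (hp : w.prod = g) : wordLength X g ≤ w.length :=
  Nat.sInf_le ⟨w, rfl, hw, hp⟩

lemma exists_word (hX : Generates X) (g : G) :
    ∃ w : List G, w.length = wordLength X g ∧ (∀ a ∈ w, a ∈ X ∨ a⁻¹ ∈ X) ∧ w.prod = g := by
  have hg : g ∈ Subgroup.closure (X : Set G) := hX ▸ Subgroup.mem_top g
  have hg2 : g ∈ Submonoid.closure ((X : Set G) ∪ (X : Set G)⁻¹) := by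
    rw [← Subgroup.closure_toSubmonoid, Subgroup.mem_toSubmonoid]; exact hg
  obtain ⟨l, hl, hlp⟩ := Submonoid.exists_list_of_mem_closure hg2
  have hne : {n | ∃ w : List G, w.length = n ∧ (∀ a ∈ w, a ∈ X ∨ a⁻¹ ∈ X) ∧ w.prod = g}.Nonempty := by
    refine ⟨l.length, l, rfl, ?_, hlp⟩
    intro a ha
    rcases hl a ha with h | h
    · exact Or.inl h
    · exact Or.inr (Set.mem_inv.mp h)
  exact Nat.sInf_mem hne

lemma wordLength_one : wordLength X (1 : G) = 0 :=
  Nat.le_zero.mp (wordLength_le (w := []) (by simp) (by simp))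

lemma wordLength_mul (hX : Generates X) (g h : G) :
    wordLength X (g * h) ≤ wordLength X g + wordLength X h := by
  obtain ⟨w1, h1, h2, h3⟩ := exists_word hX g
  obtain ⟨w2, h4, h5, h6⟩ := exists_word hX h
  have := wordLength_le (w := w1 ++ w2) (by
    intro a ha; rcases List.mem_append.mp ha with h | h
    · exact h2 a h
    · exact h5 a h) (by rw [List.prod_append, h3, h6])
  simpa [h1, h4] using this

lemma wordLength_inv_le (hX : Generates X) (g : G) :
    wordLength X g⁻¹ ≤ wordLength X g := by
  obtain ⟨w, h1, h2, h3⟩ := exists_word hX g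
  have := wordLength_le (X := X) (w := (w.map fun x => x⁻¹).reverse) (g := g⁻¹) ?_ ?_
  · simpa [h1] using this
  · intro a ha
    rw [List.mem_reverse, List.mem_map] at ha
    obtain ⟨b, hb, rfl⟩ := ha
    rcases h2 b hb with h | h
    · exact Or.inr (by simpa using h)
    · exact Or.inl h
  · rw [← List.prod_inv_reverse, h3]

lemma wordLength_inv (hX : Generates X) (g : G) :
    wordLength X g⁻¹ = wordLength X g :=
  le_antisymm (wordLength_inv_le hX g) (by
    simpa using wordLength_inv_le hX g⁻¹)

lemma wordLength_gen {x : G} (hx : x ∈ X) : wordLength X x ≤ 1 :=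
  wordLength_le (w := [x]) (by simpa using Or.inl hx) (by simp)

lemma wordLength_prod_le (hX : Generates X) (l : List G) :
    wordLength X l.prod ≤ (l.map (wordLength X)).sum := by
  induction l with
  | nil => simp [wordLength_one]
  | cons a l ih =>
      simp only [List.prod_cons, List.map_cons, List.sum_cons]
      exact le_trans (wordLength_mul hX a l.prod) (by omega)

end WordLength

section Cone

variable {G : Type*} [Group G]

/-- positive cone data -/
def IsCone (P : Set G) : Prop :=
  (∀ a ∈ P, ∀ b ∈ P, a * b ∈ P) ∧ (∀ g : G, g ≠ 1 → g ∈ P ∨ g⁻¹ ∈ P) ∧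
    (∀ g : G, ¬(g ∈ P ∧ g⁻¹ ∈ P))

lemma IsCone.one_not_mem {P : Set G} (hP : IsCone P) : (1 : G) ∉ P := by
  intro h; exact hP.2.2 1 ⟨h, by simpa using h⟩

lemma IsCone.ne_one {P : Set G} (hP : IsCone P) {g : G} (hg : g ∈ P) : g ≠ 1 := by
  rintro rfl; exact hP.one_not_mem hg

noncomputable def coneOrder (P : Set G) (hP : IsCone P) : LinearOrder G where
  le a b := a = b ∨ a⁻¹ * b ∈ P
  le_refl a := Or.inl rfl
  le_trans a b c hab hbc := by
    rcases hab with rfl | hab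
    · exact hbc
    rcases hbc with rfl | hbc
    · exact Or.inr hab
    · refine Or.inr ?_
      have h2 := hP.1 _ hab _ hbc
      have h3 : a⁻¹ * b * (b⁻¹ * c) = a⁻¹ * c := by group
      rwa [h3] at h2
  le_antisymm a b hab hba := by
    rcases hab with rfl | hab
    · rfl
    rcases hba with h | hba
    · exact h.symm
    · exact absurd ⟨hab, by simpa using hba⟩ (hP.2.2 _)
  le_total a b := by
    by_cases h : a = b
    · exact Or.inl (Or.inl h)
    · have : a⁻¹ * b ≠ 1 := by
        intro hh; exact h (by simpa [eq_comm] using (inv_mul_eq_one.mp hh))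
      rcases hP.2.1 _ this with hh | hh
      · exact Or.inl (Or.inr hh)
      · exact Or.inr (Or.inr (by simpa using hh))
  toDecidableLE := Classical.decRel _

lemma isLeftOrderable_of_cone {P : Set G} (hP : IsCone P) : IsLeftOrderable G := by
  refine ⟨coneOrder P hP, ?_⟩
  intro a b c h
  rcases h with rfl | h
  · exact Or.inl rfl
  · exact Or.inr (by simpa [mul_assoc] using h)

lemma cone_of_isLeftOrderable (h : IsLeftOrderable G) : ∃ P : Set G, IsCone P := by
  obtain ⟨l, hl⟩ := h
  letI := l
  refine ⟨{g | 1 < g}, ?_, ?_, ?_⟩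
  · intro a ha b hb
    have h1 : l.le (a * 1) (a * b) := hl a 1 b (le_of_lt hb)
    have h2 : l.lt 1 (a * b) := lt_of_lt_of_le ha (by simpa using h1)
    exact h2
  · intro g hg
    rcases lt_trichotomy 1 g with h | h | h
    · exact Or.inl h
    · exact absurd h.symm hg
    · refine Or.inr ?_
      have := hl g⁻¹ g 1 (le_of_lt h)
      simpa using lt_of_le_of_ne (by simpa using this) (by simpa [eq_comm] using hg)
  · rintro g ⟨h1, h2⟩
    have := hl g 1 g⁻¹ (le_of_lt h2)
    simp only [mul_one, mul_inv_cancel] at this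
    exact absurd (lt_of_lt_of_le h1 this) (lt_irrefl _)

lemma cone_preimage {H : Type*} [Group H] {P : Set H} (hP : IsCone P) (e : G →* H)
    (he : Function.Injective e) : IsCone (e ⁻¹' P) := by
  refine ⟨?_, ?_, ?_⟩
  · intro a ha b hb
    simp only [Set.mem_preimage, map_mul] at *
    exact hP.1 _ ha _ hb
  · intro g hg
    have : e g ≠ 1 := fun hh => hg (he (by simpa using hh))
    rcases hP.2.1 _ this with h | h
    · exact Or.inl h
    · exact Or.inr (by simpa using h)
  · rintro g ⟨h1, h2⟩
    exact hP.2.2 (e g) ⟨h1, by simpa using h2⟩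

end Cone

section PiCone
open scoped Classical
variable {G : ℕ → Type*} [∀ i, Group (G i)] (Pos : ∀ i, Set (G i))

def piCone : Set (∀ i, G i) :=
  {f | ∃ h : ∃ i, f i ≠ 1, f (Nat.find h) ∈ Pos (Nat.find h)}

lemma nat_find_eq {f : ∀ i, G i} (h : ∃ i, f i ≠ 1) {c : ℕ} (hc1 : f c ≠ 1)
    (hc2 : ∀ k, k < c → f k = 1) : Nat.find h = c := by
  rw [Nat.find_eq_iff]
  exact ⟨hc1, fun k hk => not_not.mpr (hc2 k hk)⟩

lemma mem_piCone {f : ∀ i, G i} {c : ℕ} (hc1 : f c ≠ 1) (hc2 : ∀ k, k < c → f k = 1)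
    (hc3 : f c ∈ Pos c) : f ∈ piCone Pos := by
  have h : ∃ i, f i ≠ 1 := ⟨c, hc1⟩
  have := nat_find_eq h hc1 hc2
  exact ⟨h, by rw [this]; exact hc3⟩

lemma piCone_isCone (hPos : ∀ i, IsCone (Pos i)) : IsCone (piCone Pos) := by
  refine ⟨?_, ?_, ?_⟩
  · rintro f ⟨hf, hfP⟩ g ⟨hg, hgP⟩
    have hfa : f (Nat.find hf) ≠ 1 := Nat.find_spec hf
    have hgb : g (Nat.find hg) ≠ 1 := Nat.find_spec hg
    set a := Nat.find hf
    set b := Nat.find hg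
    have hflt : ∀ k, k < a → f k = 1 := fun k hk => not_not.mp (Nat.find_min hf hk)
    have hglt : ∀ k, k < b → g k = 1 := fun k hk => not_not.mp (Nat.find_min hg hk)
    have hlow : ∀ k, k < min a b → (f * g) k = 1 := by
      intro k hk
      have h1 := hflt k (lt_of_lt_of_le hk (min_le_left _ _))
      have h2 := hglt k (lt_of_lt_of_le hk (min_le_right _ _))
      simp [Pi.mul_apply, h1, h2]
    rcases lt_trichotomy a b with h | h | h
    · refine mem_piCone Pos (c := a) ?_ ?_ ?_
      · simpa [Pi.mul_apply, hglt a h] using hfa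
      · simpa [min_eq_left (le_of_lt h)] using hlow
      · simpa [Pi.mul_apply, hglt a h] using hfP
    · have hmem : f a * g a ∈ Pos a := (hPos a).1 _ hfP _ (by rw [h]; exact hgP)
      refine mem_piCone Pos (c := a) ?_ ?_ ?_
      · exact (hPos a).ne_one hmem
      · simpa [min_eq_left (le_of_eq h)] using hlow
      · exact hmem
    · refine mem_piCone Pos (c := b) ?_ ?_ ?_
      · simpa [Pi.mul_apply, hflt b h] using hgb
      · simpa [min_eq_right (le_of_lt h)] using hlow
      · simpa [Pi.mul_apply, hflt b h] using hgP
  · intro f hf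
    have h : ∃ i, f i ≠ 1 := by
      by_contra hh
      push_neg at hh
      exact hf (funext fun i => hh i)
    have hfa : f (Nat.find h) ≠ 1 := Nat.find_spec h
    have hflt : ∀ k, k < Nat.find h → f k = 1 := fun k hk => not_not.mp (Nat.find_min h hk)
    rcases (hPos _).2.1 _ hfa with hc | hc
    · exact Or.inl ⟨h, hc⟩
    · refine Or.inr (mem_piCone Pos (c := Nat.find h) ?_ ?_ ?_)
      · simpa using hfa
      · intro k hk; simp [hflt k hk]
      · simpa using hc
  · rintro f ⟨⟨hf, hfP⟩, ⟨hg, hgP⟩⟩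
    have hfa : f (Nat.find hf) ≠ 1 := Nat.find_spec hf
    have hflt : ∀ k, k < Nat.find hf → f k = 1 := fun k hk => not_not.mp (Nat.find_min hf hk)
    have : Nat.find hg = Nat.find hf := by
      refine nat_find_eq hg ?_ ?_
      · simpa using hfa
      · intro k hk; simp [hflt k hk]
    rw [this] at hgP
    exact (hPos _).2.2 _ ⟨hfP, by simpa using hgP⟩

end PiCone

section SDCone
variable {N : Type*} [Group N] {Q : Type*} [Group Q] {φ : Q →* MulAut N}

open SemidirectProduct

def sdCone (PN : Set N) (PQ : Set Q) : Set (N ⋊[φ] Q) :=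
  {x | x.right ∈ PQ ∨ (x.right = 1 ∧ x.left ∈ PN)}

lemma sd_eq_one_iff (x : N ⋊[φ] Q) : x = 1 ↔ x.left = 1 ∧ x.right = 1 := by
  constructor
  · rintro rfl; simp
  · rintro ⟨h1, h2⟩; ext <;> simpa

lemma sdCone_isCone {PN : Set N} {PQ : Set Q} (hN : IsCone PN) (hQ : IsCone PQ) :
    IsCone (sdCone (φ := φ) PN PQ) := by
  refine ⟨?_, ?_, ?_⟩
  · rintro a (ha | ⟨ha1, ha2⟩) b (hb | ⟨hb1, hb2⟩)
    · exact Or.inl (by simp only [mul_right]; exact hQ.1 _ ha _ hb)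
    · exact Or.inl (by simp only [mul_right, hb1, mul_one]; exact ha)
    · exact Or.inl (by simp only [mul_right, ha1, one_mul]; exact hb)
    · refine Or.inr ⟨by simp [mul_right, ha1, hb1], ?_⟩
      simp only [mul_left, ha1, map_one, MulAut.one_apply]
      exact hN.1 _ ha2 _ hb2
  · intro x hx
    by_cases hr : x.right = 1
    · have hl : x.left ≠ 1 := by
        intro hh; exact hx ((sd_eq_one_iff x).mpr ⟨hh, hr⟩)
      rcases hN.2.1 _ hl with h | h
      · exact Or.inl (Or.inr ⟨hr, h⟩)
      · refine Or.inr (Or.inr ⟨by simp [inv_right, hr], ?_⟩)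
        simpa [inv_left, hr] using h
    · rcases hQ.2.1 _ hr with h | h
      · exact Or.inl (Or.inl h)
      · exact Or.inr (Or.inl (by simpa [inv_right] using h))
  · rintro x ⟨(h1 | ⟨h1, h1'⟩), (h2 | ⟨h2, h2'⟩)⟩
    · exact hQ.2.2 x.right ⟨h1, by simpa [inv_right] using h2⟩
    · rw [inv_right, inv_eq_one] at h2
      rw [h2] at h1
      exact hQ.one_not_mem h1
    · rw [inv_right, h1, inv_one] at h2
      exact hQ.one_not_mem h2
    · refine hN.2.2 x.left ⟨h1', ?_⟩
      simpa [inv_left, h1] using h2'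

end SDCone

lemma multIntCone : IsCone {z : Multiplicative ℤ | 0 < z.toAdd} := by
  refine ⟨?_, ?_, ?_⟩
  · intro a ha b hb
    simp only [Set.mem_setOf_eq, toAdd_mul] at *
    omega
  · intro g hg
    have : g.toAdd ≠ 0 := by
      intro h; exact hg (by
        have : g = Multiplicative.ofAdd 0 := by
          apply Multiplicative.toAdd.injective; simpa using h
        simpa using this)
    simp only [Set.mem_setOf_eq, toAdd_inv]
    omega
  · intro g ⟨h1, h2⟩
    simp only [Set.mem_setOf_eq, toAdd_inv] at *
    omega


section Shift
variable (K : Type*) [Group K]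

def shiftEquiv (a : ℤ) : (ℤ → K) ≃* (ℤ → K) where
  toFun f n := f (n - a)
  invFun f n := f (n + a)
  left_inv f := funext fun n => by simp
  right_inv f := funext fun n => by simp
  map_mul' f g := rfl

def shiftHom : Multiplicative ℤ →* MulAut (ℤ → K) where
  toFun a := shiftEquiv K a.toAdd
  map_one' := by
    refine MulEquiv.ext fun f => funext fun n => ?_
    show f (n - (0:ℤ)) = f n
    norm_num
  map_mul' a b := by
    refine MulEquiv.ext fun f => funext fun n => ?_
    show f (n - (a.toAdd + b.toAdd)) = f (n - a.toAdd - b.toAdd)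
    ring_nf

lemma shiftHom_apply (a : ℤ) (f : ℤ → K) (n : ℤ) :
    shiftHom K (Multiplicative.ofAdd a) f n = f (n - a) := rfl

lemma shiftHom_apply' (a : Multiplicative ℤ) (f : ℤ → K) (n : ℤ) :
    shiftHom K a f n = f (n - a.toAdd) := rfl

lemma shiftHom_mulSingle (a : ℤ) (p : ℤ) (v : K) :
    shiftHom K (Multiplicative.ofAdd a) (Pi.mulSingle p v) = Pi.mulSingle (p + a) v := by
  funext n
  rw [shiftHom_apply]
  by_cases h : n = p + a
  · rw [h]
    simp [Pi.mulSingle_apply]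
  · rw [Pi.mulSingle_apply, Pi.mulSingle_apply, if_neg h, if_neg (by omega)]

end Shift

section Arith

lemma pow4_pos (k : ℕ) : 0 < (4:ℤ)^k := pow_pos (by norm_num) k

lemma pow4_le {a b : ℕ} : (4:ℤ)^a ≤ 4^b ↔ a ≤ b :=
  pow_le_pow_iff_right₀ (by norm_num)

lemma pow4_lt {a b : ℕ} : (4:ℤ)^a < 4^b ↔ a < b :=
  pow_lt_pow_iff_right₀ (by norm_num)

lemma pow4_inj {a b : ℕ} (h : (4:ℤ)^a = 4^b) : a = b :=
  le_antisymm (pow4_le.mp h.le) (pow4_le.mp h.ge)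

lemma pow4_mod3 (k : ℕ) : (4:ℤ)^k % 3 = 1 := by
  have : (4:ℤ)^k ≡ 1^k [ZMOD 3] := Int.ModEq.pow k (by decide)
  simpa [Int.ModEq] using this

lemma sidon {a b c : ℕ} : (4:ℤ)^a ≠ 4^b + 4^c := by
  intro h
  have h1 := pow4_mod3 a
  have h2 := pow4_mod3 b
  have h3 := pow4_mod3 c
  rw [h] at h1
  omega

end Arith

open scoped commutatorElement

section CommHelp
open SemidirectProduct
variable {N : Type*} [Group N] {Q : Type*} [Group Q] {φ : Q →* MulAut N}

lemma comm_inl_inr (u : N) (v : Q) :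
    ⁅(inl u : N ⋊[φ] Q), (inr v : N ⋊[φ] Q)⁆ = inl (u * φ v u⁻¹) := by
  ext <;> simp [commutatorElement_def]

lemma comm_inl_inl (u w : N) :
    ⁅(inl u : N ⋊[φ] Q), (inl w : N ⋊[φ] Q)⁆ = inl ⁅u, w⁆ := by
  ext <;> simp [commutatorElement_def]

end CommHelp

section Construction
open SemidirectProduct
open scoped Classical
variable (G : ℕ → Type) [∀ i, Group (G i)]

abbrev PP := ∀ i, G i
abbrev CC := (ℤ → PP G) ⋊[shiftHom (PP G)] Multiplicative ℤ
abbrev WW := (ℤ → CC G) ⋊[shiftHom (CC G)] Multiplicative ℤ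

def sC : CC G := inr (Multiplicative.ofAdd 1)
def heav (x : PP G) : ℤ → PP G := fun m => if m ≤ 0 then x else 1
def HX (x : PP G) : CC G := inl (heav G x)

/-- commutator of a Heaviside with the shift is a single generator copy -/
lemma comm_HX_sC (x : PP G) :
    ⁅HX G x, sC G⁆ = inl (Pi.mulSingle (1:ℤ) x⁻¹) := by
  rw [HX, sC, comm_inl_inr]
  congr 1
  funext m
  rw [Pi.mul_apply, shiftHom_apply, Pi.inv_apply, heav, heav]
  by_cases h1 : m ≤ 0
  · rw [if_pos h1, if_pos (show m - 1 ≤ 0 by omega), Pi.mulSingle_apply,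
      if_neg (show ¬ m = 1 by omega), mul_inv_cancel]
  · by_cases h2 : m = 1
    · subst h2
      norm_num [Pi.mulSingle_apply]
    · rw [if_neg h1, if_neg (show ¬ m - 1 ≤ 0 by omega), Pi.mulSingle_apply, if_neg h2,
        one_mul, inv_one]

variable (Xf : ∀ i, Finset (G i))

noncomputable def xg (k : ℕ) : PP G := Pi.mulSingle k.unpair.1 ((Xf k.unpair.1).toList.getD k.unpair.2 1)

noncomputable def fB : ℤ → CC G := fun n =>
  if h : ∃ k : ℕ, n = (4:ℤ)^k then HX G (xg G Xf h.choose) else if n ≤ 0 then sC G else 1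

lemma fB_pow (k : ℕ) : fB G Xf ((4:ℤ)^k) = HX G (xg G Xf k) := by
  have h : ∃ k' : ℕ, (4:ℤ)^k = 4^k' := ⟨k, rfl⟩
  rw [fB, dif_pos h, pow4_inj h.choose_spec.symm]

lemma fB_nonpos {n : ℤ} (hn : n ≤ 0) : fB G Xf n = sC G := by
  rw [fB, dif_neg, if_pos hn]
  rintro ⟨k, rfl⟩
  exact absurd (pow4_pos k) (by omega)

lemma fB_other {n : ℤ} (hn : ¬ n ≤ 0) (h2 : ¬ ∃ k : ℕ, n = (4:ℤ)^k) : fB G Xf n = 1 := by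
  rw [fB, dif_neg h2, if_neg hn]

end Construction
section MainIdent
open SemidirectProduct
open scoped Classical
variable (G : ℕ → Type) [∀ i, Group (G i)] (Xf : ∀ i, Finset (G i))

noncomputable def DX (k : ℕ) : CC G := inl (Pi.mulSingle (1:ℤ) (xg G Xf k)⁻¹)

lemma commA {l k : ℕ} (h : l ≤ k) :
    ⁅fB G Xf ((4:ℤ)^l), fB G Xf ((4:ℤ)^l - (4:ℤ)^k)⁆ = DX G Xf l := by
  rw [fB_pow, fB_nonpos G Xf (by simpa [sub_nonpos] using pow4_le.mpr h), comm_HX_sC, DX]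

lemma commB {n : ℤ} {k : ℕ} (h : ¬ ∃ l : ℕ, l ≤ k ∧ n = (4:ℤ)^l) :
    ⁅fB G Xf n, fB G Xf (n - (4:ℤ)^k)⁆ = 1 := by
  by_cases hn : n ≤ 0
  · rw [fB_nonpos G Xf hn, fB_nonpos G Xf (by have := pow4_pos k; omega)]
    simp [commutatorElement_def]
  · by_cases hp : ∃ l : ℕ, n = (4:ℤ)^l
    · obtain ⟨l, rfl⟩ := hp
      have hkl : k < l := by
        by_contra hh
        exact h ⟨l, by omega, rfl⟩
      have h1 : ¬ ((4:ℤ)^l - (4:ℤ)^k ≤ 0) := by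
        have := pow4_lt.mpr hkl
        omega
      have h2 : ¬ ∃ j : ℕ, (4:ℤ)^l - (4:ℤ)^k = (4:ℤ)^j := by
        rintro ⟨j, hj⟩
        exact sidon (a := l) (b := j) (c := k) (by omega)
      rw [fB_other G Xf h1 h2]
      simp [commutatorElement_def]
    · rw [fB_other G Xf hn hp]
      simp [commutatorElement_def]

lemma mainK (k : ℕ) :
    (fun n : ℤ => ⁅fB G Xf n, fB G Xf (n - (4:ℤ)^(k+1))⁆ *
        ⁅fB G Xf n, fB G Xf (n - (4:ℤ)^k)⁆⁻¹) =
      Pi.mulSingle ((4:ℤ)^(k+1)) (DX G Xf (k+1)) := by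
  funext n
  by_cases h : n = (4:ℤ)^(k+1)
  · subst h
    rw [commA G Xf (le_refl (k+1)), commB G Xf (k := k) ?_, inv_one, mul_one,
      Pi.mulSingle_eq_same]
    rintro ⟨l, hl, he⟩
    have := pow4_inj he
    omega
  · rw [Pi.mulSingle_apply, if_neg h]
    by_cases h2 : ∃ l : ℕ, l ≤ k ∧ n = (4:ℤ)^l
    · obtain ⟨l, hl, rfl⟩ := h2
      rw [commA G Xf (by omega : l ≤ k + 1), commA G Xf hl, mul_inv_cancel]
    · rw [commB G Xf (k := k+1) ?_, commB G Xf h2, inv_one, mul_one]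
      rintro ⟨l, hl, he⟩
      rcases Nat.lt_or_ge l (k+1) with hh | hh
      · exact h2 ⟨l, by omega, he⟩
      · exact h (by rw [he]; congr 1; omega)

lemma main0 :
    (fun n : ℤ => ⁅fB G Xf n, fB G Xf (n - (4:ℤ)^(0:ℕ))⁆) =
      Pi.mulSingle ((4:ℤ)^(0:ℕ)) (DX G Xf 0) := by
  funext n
  by_cases h : n = (4:ℤ)^(0:ℕ)
  · subst h
    rw [commA G Xf (le_refl 0), Pi.mulSingle_eq_same]
  · rw [Pi.mulSingle_apply, if_neg h, commB G Xf]
    rintro ⟨l, hl, he⟩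
    interval_cases l
    exact h he

end MainIdent
section Membership
open SemidirectProduct

lemma comm_mem {H : Type*} [Group H] (K : Subgroup H) {a b : H} (ha : a ∈ K) (hb : b ∈ K) :
    ⁅a, b⁆ ∈ K := by
  rw [commutatorElement_def]
  exact mul_mem (mul_mem (mul_mem ha hb) (inv_mem ha)) (inv_mem hb)
open scoped Classical
variable (G : ℕ → Type) [∀ i, Group (G i)] (Xf : ∀ i, Finset (G i))

noncomputable def fW : WW G := inl (fB G Xf)
def tW : WW G := inr (Multiplicative.ofAdd 1)
noncomputable def KK : Subgroup (WW G) := Subgroup.closure {tW G, fW G Xf}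

lemma tW_mem : tW G ∈ KK G Xf := Subgroup.subset_closure (by simp)
lemma fW_mem : fW G Xf ∈ KK G Xf := Subgroup.subset_closure (by simp)

lemma tW_zpow (m : ℤ) : (tW G)^m = inr (Multiplicative.ofAdd m) := by
  rw [tW, ← map_zpow]
  congr 1
  apply Multiplicative.toAdd.injective
  rw [toAdd_zpow]
  simp

lemma conj_tW (m : ℤ) (F : ℤ → CC G) :
    (tW G)^m * inl F * ((tW G)^m)⁻¹ = inl (fun n => F (n - m)) := by
  rw [tW_zpow, ← map_inv, ← inl_aut]
  rfl

lemma comm_fW (m : ℤ) :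
    ⁅fW G Xf, (tW G)^m * fW G Xf * ((tW G)^m)⁻¹⁆ =
      inl (fun n => ⁅fB G Xf n, fB G Xf (n - m)⁆) := by
  rw [fW, conj_tW, comm_inl_inl]
  rfl

lemma mem_KK_single (k : ℕ) :
    (inl (Pi.mulSingle (0:ℤ) (inl (Pi.mulSingle (1:ℤ) (xg G Xf k)) : CC G)) : WW G)
      ∈ KK G Xf := by
  have hbase : ∀ j : ℕ,
      (inl (Pi.mulSingle ((4:ℤ)^j) (DX G Xf j)) : WW G) ∈ KK G Xf := by
    intro j
    cases j with
    | zero =>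
        have h := comm_fW G Xf ((4:ℤ)^(0:ℕ))
        rw [main0 G Xf] at h
        rw [← h]
        exact comm_mem (KK G Xf) (fW_mem G Xf)
          (mul_mem (mul_mem (zpow_mem (tW_mem G Xf) _) (fW_mem G Xf))
            (inv_mem (zpow_mem (tW_mem G Xf) _)))
    | succ k =>
        have h1 := comm_fW G Xf ((4:ℤ)^(k+1))
        have h2 := comm_fW G Xf ((4:ℤ)^k)
        have key : (inl (Pi.mulSingle ((4:ℤ)^(k+1)) (DX G Xf (k+1))) : WW G) =
            ⁅fW G Xf, (tW G)^((4:ℤ)^(k+1)) * fW G Xf * ((tW G)^((4:ℤ)^(k+1)))⁻¹⁆ *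
              ⁅fW G Xf, (tW G)^((4:ℤ)^k) * fW G Xf * ((tW G)^((4:ℤ)^k))⁻¹⁆⁻¹ := by
          rw [h1, h2, ← map_inv, ← map_mul, ← mainK G Xf k]
          rfl
        rw [key]
        refine mul_mem ?_ (inv_mem ?_) <;>
          exact comm_mem (KK G Xf) (fW_mem G Xf)
            (mul_mem (mul_mem (zpow_mem (tW_mem G Xf) _) (fW_mem G Xf))
              (inv_mem (zpow_mem (tW_mem G Xf) _)))
  have h3 := hbase k
  have h4 : (tW G)^(-((4:ℤ)^k)) * inl (Pi.mulSingle ((4:ℤ)^k) (DX G Xf k)) *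
      ((tW G)^(-((4:ℤ)^k)))⁻¹ =
      inl (Pi.mulSingle (0:ℤ) (DX G Xf k)) := by
    rw [conj_tW]
    congr 1
    have := shiftHom_mulSingle (CC G) (-((4:ℤ)^k)) ((4:ℤ)^k) (DX G Xf k)
    have h5 : ((4:ℤ)^k) + (-((4:ℤ)^k)) = 0 := by ring
    rw [h5] at this
    rw [← this]
    rfl
  have h6 : (inl (Pi.mulSingle (0:ℤ) (DX G Xf k)) : WW G) ∈ KK G Xf := by
    rw [← h4]
    exact mul_mem (mul_mem (zpow_mem (tW_mem G Xf) _) h3) (inv_mem (zpow_mem (tW_mem G Xf) _))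
  have h7 : (inl (Pi.mulSingle (0:ℤ) (inl (Pi.mulSingle (1:ℤ) (xg G Xf k)) : CC G)) : WW G) =
      (inl (Pi.mulSingle (0:ℤ) (DX G Xf k)))⁻¹ := by
    rw [← map_inv, ← Pi.mulSingle_inv, DX, ← map_inv, ← Pi.mulSingle_inv, inv_inv]
  rw [h7]
  exact inv_mem h6

end Membership
section Embed
open SemidirectProduct

lemma sd_conj_of_isConj {N : Type*} [Group N] {Q : Type*} [Group Q] {φ : Q →* MulAut N}
    {x y : N} (h : IsConj (inl x : N ⋊[φ] Q) (inl y)) :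
    ∃ (l : N) (r : Q), y = l * φ r x * l⁻¹ := by
  obtain ⟨c, hc⟩ := isConj_iff.mp h
  have h' : c * inl x = inl y * c := by
    rw [← hc]; group
  have h1 := congrArg SemidirectProduct.left h'
  simp only [mul_left, left_inl, right_inl, map_one, MulAut.one_apply] at h1
  exact ⟨c.left, c.right, by rw [h1]; group⟩

lemma single_conj {K : Type*} [Group K] {q : ℤ} {A B : K}
    (h : ∃ (l : ℤ → K) (r : Multiplicative ℤ),
      Pi.mulSingle q B = l * shiftHom K r (Pi.mulSingle q A) * l⁻¹) : IsConj A B := by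
  obtain ⟨l, r, hr⟩ := h
  have hs : shiftHom K r (Pi.mulSingle q A) = Pi.mulSingle (q + r.toAdd) A := by
    rw [show r = Multiplicative.ofAdd r.toAdd by simp, shiftHom_mulSingle]
    simp
  rw [hs] at hr
  by_cases hρ : r.toAdd = 0
  · rw [hρ, add_zero] at hr
    have h2 := congrFun hr q
    simp only [Pi.mul_apply, Pi.inv_apply, Pi.mulSingle_eq_same] at h2
    exact isConj_iff.mpr ⟨l q, h2.symm⟩
  · have hne1 : ¬ q + r.toAdd = q := by omega
    have hne2 : ¬ q = q + r.toAdd := by omega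
    have h1 := congrFun hr (q + r.toAdd)
    have h2 := congrFun hr q
    simp only [Pi.mul_apply, Pi.inv_apply, Pi.mulSingle_apply] at h1 h2
    simp only [if_true, if_neg hne2] at h1 h2
    rw [if_neg hne1] at h1
    have hA : A = 1 := by
      have h4 := h1.symm
      rw [mul_inv_eq_one, mul_eq_left] at h4
      exact h4
    have hB : B = 1 := by
      rw [mul_one] at h2
      rwa [mul_inv_cancel] at h2
    rw [hA, hB]

lemma pi_single_conj {G : ℕ → Type} [∀ i, Group (G i)] {i : ℕ} {a b : G i}
    (h : IsConj (Pi.mulSingle i a) (Pi.mulSingle i b)) : IsConj a b := by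
  obtain ⟨c, hc⟩ := isConj_iff.mp h
  have h1 := congrFun hc i
  simp only [Pi.mul_apply, Pi.inv_apply, Pi.mulSingle_eq_same] at h1
  exact isConj_iff.mpr ⟨c i, h1⟩

variable (G : ℕ → Type) [∀ i, Group (G i)] (Xf : ∀ i, Finset (G i)) (i : ℕ)

noncomputable def psi : G i →* WW G :=
  (inl : (ℤ → CC G) →* WW G).comp
    ((MonoidHom.mulSingle (fun _ : ℤ => CC G) 0).comp
      ((inl : (ℤ → PP G) →* CC G).comp
        ((MonoidHom.mulSingle (fun _ : ℤ => PP G) 1).comp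
          (MonoidHom.mulSingle G i))))

lemma psi_apply (g : G i) :
    psi G i g = inl (Pi.mulSingle (0:ℤ) (inl (Pi.mulSingle (1:ℤ) (Pi.mulSingle i g)) : CC G)) :=
  rfl

lemma psi_inj : Function.Injective (psi G i) := by
  intro a b h
  rw [psi_apply, psi_apply] at h
  have h1 := congrFun (inl_injective h) 0
  simp only [Pi.mulSingle_eq_same] at h1
  have h2 := congrFun (inl_injective h1) 1
  simp only [Pi.mulSingle_eq_same] at h2
  have h3 := congrFun h2 i
  simpa using h3

lemma psi_conj_back {a b : G i} (h : IsConj (psi G i a) (psi G i b)) : IsConj a b := by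
  rw [psi_apply, psi_apply] at h
  obtain ⟨l1, r1, hw⟩ := sd_conj_of_isConj h
  have hC : IsConj (inl (Pi.mulSingle (1:ℤ) (Pi.mulSingle i a)) : CC G)
      (inl (Pi.mulSingle (1:ℤ) (Pi.mulSingle i b))) :=
    single_conj ⟨l1, r1, hw⟩
  obtain ⟨l2, r2, hw2⟩ := sd_conj_of_isConj hC
  have hP : IsConj (Pi.mulSingle i a) (Pi.mulSingle i b) := single_conj ⟨l2, r2, hw2⟩
  exact pi_single_conj hP

lemma psi_mem_KK (hXf : Subgroup.closure ((Xf i : Set (G i))) = ⊤) (g : G i) :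
    psi G i g ∈ KK G Xf := by
  have hg : g ∈ Subgroup.closure ((Xf i : Set (G i))) := hXf ▸ Subgroup.mem_top g
  refine Subgroup.closure_induction ?_ ?_ ?_ ?_ hg
  · intro x hx
    obtain ⟨n, hn⟩ := List.get_of_mem (Finset.mem_toList.mpr hx)
    have hget : ((Xf i).toList).getD n.1 1 = x := by
      rw [List.getD_eq_getElem _ _ n.2]
      simpa using hn
    have hmem := mem_KK_single G Xf (Nat.pair i n.1)
    have hxg : xg G Xf (Nat.pair i n.1) = Pi.mulSingle i x := by
      rw [xg, Nat.unpair_pair]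
      simpa using congrArg (Pi.mulSingle i) hget
    rw [hxg] at hmem
    rw [psi_apply]
    exact hmem
  · simpa using (KK G Xf).one_mem
  · intro x y _ _ hx hy
    rw [map_mul]
    exact mul_mem hx hy
  · intro x _ hx
    rw [map_inv]
    exact inv_mem hx

end Embed
section Length
open SemidirectProduct

lemma iSup_eq_of {ι : Type*} [Nonempty ι] (c : ι → ℕ∞) (i : ι) (h : ∀ j, j ≠ i → c j = 0) :
    ⨆ j, c j = c i := by
  refine le_antisymm (iSup_le fun j => ?_) (le_iSup _ i)
  by_cases hj : j = i
  · subst hj; exact le_rfl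
  · rw [h j hj]; exact zero_le

variable (G : ℕ → Type) [∀ i, Group (G i)] (Xf : ∀ i, Finset (G i))

noncomputable def lP (p : PP G) : ℕ∞ := ⨆ i, (wordLength (Xf i) (p i) : ℕ∞)

noncomputable def lC (c : CC G) : ℕ∞ :=
  (c.right.toAdd.natAbs : ℕ∞) + ⨆ m : ℤ, lP G Xf (c.left m)

noncomputable def lW (w : WW G) : ℕ∞ :=
  (w.right.toAdd.natAbs : ℕ∞) + ⨆ n : ℤ, lC G Xf (w.left n)


lemma lP_one : lP G Xf 1 = 0 := by
  simp [lP, wordLength_one]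

lemma lP_mul (hXf : ∀ i, Generates (Xf i)) (p q : PP G) : lP G Xf (p * q) ≤ lP G Xf p + lP G Xf q := by
  rw [lP, lP, lP]
  refine iSup_le fun i => ?_
  calc (wordLength (Xf i) ((p * q) i) : ℕ∞)
      ≤ ((wordLength (Xf i) (p i) + wordLength (Xf i) (q i) : ℕ) : ℕ∞) := by
        exact_mod_cast Nat.cast_le.mpr (wordLength_mul (hXf i) (p i) (q i))
    _ = (wordLength (Xf i) (p i) : ℕ∞) + (wordLength (Xf i) (q i) : ℕ∞) := by push_cast; rfl
    _ ≤ _ := add_le_add (le_iSup (fun j => (wordLength (Xf j) (p j) : ℕ∞)) i) (le_iSup (fun j => (wordLength (Xf j) (q j) : ℕ∞)) i)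

lemma lP_inv (hXf : ∀ i, Generates (Xf i)) (p : PP G) : lP G Xf p⁻¹ = lP G Xf p := by
  rw [lP, lP]
  refine iSup_congr fun i => ?_
  rw [Pi.inv_apply, wordLength_inv (hXf i)]

lemma lP_single (i : ℕ) (g : G i) : lP G Xf (Pi.mulSingle i g) = wordLength (Xf i) g := by
  rw [lP, iSup_eq_of _ i]
  · rw [Pi.mulSingle_eq_same]
  · intro j hj
    rw [Pi.mulSingle_eq_of_ne hj, wordLength_one, Nat.cast_zero]

lemma lC_one : lC G Xf 1 = 0 := by
  simp [lC, one_left, one_right, lP_one]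

lemma lC_mul (hXf : ∀ i, Generates (Xf i)) (c d : CC G) : lC G Xf (c * d) ≤ lC G Xf c + lC G Xf d := by
  rw [lC, lC, lC]
  have h1 : (((c * d).right.toAdd.natAbs : ℕ) : ℕ∞) ≤
      (c.right.toAdd.natAbs : ℕ∞) + (d.right.toAdd.natAbs : ℕ∞) := by
    rw [mul_right, toAdd_mul]
    exact_mod_cast Nat.cast_le.mpr (Int.natAbs_add_le _ _)
  have h2 : (⨆ m : ℤ, lP G Xf ((c * d).left m)) ≤
      (⨆ m : ℤ, lP G Xf (c.left m)) + ⨆ m : ℤ, lP G Xf (d.left m) := by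
    refine iSup_le fun m => ?_
    have : (c * d).left m = c.left m * d.left (m - c.right.toAdd) := by
      rw [mul_left, Pi.mul_apply, shiftHom_apply']
    rw [this]
    exact le_trans (lP_mul G Xf hXf _ _)
      (add_le_add (le_iSup (fun n : ℤ => lP G Xf (c.left n)) m)
        (le_iSup (fun n : ℤ => lP G Xf (d.left n)) (m - c.right.toAdd)))
  calc ((c * d).right.toAdd.natAbs : ℕ∞) + ⨆ m : ℤ, lP G Xf ((c * d).left m)
      ≤ ((c.right.toAdd.natAbs : ℕ∞) + (d.right.toAdd.natAbs : ℕ∞)) +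
        ((⨆ m : ℤ, lP G Xf (c.left m)) + ⨆ m : ℤ, lP G Xf (d.left m)) := add_le_add h1 h2
    _ = _ := by rw [add_add_add_comm]

lemma lC_inv (hXf : ∀ i, Generates (Xf i)) (c : CC G) : lC G Xf c⁻¹ ≤ lC G Xf c := by
  rw [lC, lC]
  refine add_le_add (by rw [inv_right, toAdd_inv, Int.natAbs_neg]) (iSup_le fun m => ?_)
  have : c⁻¹.left m = (c.left (m - (c.right⁻¹).toAdd))⁻¹ := by
    rw [inv_left, shiftHom_apply', Pi.inv_apply]
  rw [this]
  have h3 : lP G Xf ((c.left (m - (c.right⁻¹).toAdd))⁻¹) =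
      lP G Xf (c.left (m - (c.right⁻¹).toAdd)) := lP_inv G Xf hXf _
  rw [h3]
  exact le_iSup (fun n : ℤ => lP G Xf (c.left n)) _

lemma lW_one : lW G Xf 1 = 0 := by
  simp [lW, one_left, one_right, lC_one]

lemma lW_mul (hXf : ∀ i, Generates (Xf i)) (c d : WW G) : lW G Xf (c * d) ≤ lW G Xf c + lW G Xf d := by
  rw [lW, lW, lW]
  have h1 : (((c * d).right.toAdd.natAbs : ℕ) : ℕ∞) ≤
      (c.right.toAdd.natAbs : ℕ∞) + (d.right.toAdd.natAbs : ℕ∞) := by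
    rw [mul_right, toAdd_mul]
    exact_mod_cast Nat.cast_le.mpr (Int.natAbs_add_le _ _)
  have h2 : (⨆ m : ℤ, lC G Xf ((c * d).left m)) ≤
      (⨆ m : ℤ, lC G Xf (c.left m)) + ⨆ m : ℤ, lC G Xf (d.left m) := by
    refine iSup_le fun m => ?_
    have : (c * d).left m = c.left m * d.left (m - c.right.toAdd) := by
      rw [mul_left, Pi.mul_apply, shiftHom_apply']
    rw [this]
    exact le_trans (lC_mul G Xf hXf _ _)
      (add_le_add (le_iSup (fun n : ℤ => lC G Xf (c.left n)) m)
        (le_iSup (fun n : ℤ => lC G Xf (d.left n)) (m - c.right.toAdd)))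
  calc ((c * d).right.toAdd.natAbs : ℕ∞) + ⨆ m : ℤ, lC G Xf ((c * d).left m)
      ≤ ((c.right.toAdd.natAbs : ℕ∞) + (d.right.toAdd.natAbs : ℕ∞)) +
        ((⨆ m : ℤ, lC G Xf (c.left m)) + ⨆ m : ℤ, lC G Xf (d.left m)) := add_le_add h1 h2
    _ = _ := by rw [add_add_add_comm]

lemma lW_inv (hXf : ∀ i, Generates (Xf i)) (c : WW G) : lW G Xf c⁻¹ ≤ lW G Xf c := by
  rw [lW, lW]
  refine add_le_add (by rw [inv_right, toAdd_inv, Int.natAbs_neg]) (iSup_le fun m => ?_)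
  have : c⁻¹.left m = (c.left (m - (c.right⁻¹).toAdd))⁻¹ := by
    rw [inv_left, shiftHom_apply', Pi.inv_apply]
  rw [this]
  exact le_trans (lC_inv G Xf hXf _) (le_iSup (fun n : ℤ => lC G Xf (c.left n)) _)

lemma lW_tW : lW G Xf (tW G) ≤ 1 := by
  rw [lW, tW]
  have h1 : (⨆ n : ℤ, lC G Xf ((inr (Multiplicative.ofAdd 1) : WW G).left n)) = 0 := by
    refine le_antisymm (iSup_le fun n => ?_) (zero_le)
    rw [left_inr, Pi.one_apply, lC_one]
  rw [h1, add_zero, right_inr]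
  norm_num

lemma lC_sC : lC G Xf (sC G) ≤ 1 := by
  rw [lC, sC]
  have h1 : (⨆ n : ℤ, lP G Xf ((inr (Multiplicative.ofAdd 1) : CC G).left n)) = 0 := by
    refine le_antisymm (iSup_le fun n => ?_) (zero_le)
    rw [left_inr, Pi.one_apply, lP_one]
  rw [h1, add_zero, right_inr]
  norm_num

lemma lC_HX (x : PP G) : lC G Xf (HX G x) ≤ lP G Xf x := by
  rw [lC, HX, right_inl]
  simp only [toAdd_one, Int.natAbs_zero, Nat.cast_zero, zero_add]
  refine iSup_le fun m => ?_
  rw [left_inl, heav]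
  by_cases h : m ≤ 0
  · rw [if_pos h]
  · rw [if_neg h, lP_one]
    exact zero_le

lemma lP_xg (k : ℕ) : lP G Xf (xg G Xf k) ≤ 1 := by
  rw [xg, lP_single]
  by_cases h : k.unpair.2 < (Xf k.unpair.1).toList.length
  · have hmem : (Xf k.unpair.1).toList.getD k.unpair.2 1 ∈ Xf k.unpair.1 := by
      rw [List.getD_eq_getElem _ _ h]
      exact Finset.mem_toList.mp (List.getElem_mem _)
    exact_mod_cast Nat.cast_le.mpr (wordLength_gen hmem)
  · rw [List.getD_eq_default _ _ (by omega), wordLength_one]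
    exact zero_le

lemma lW_fW : lW G Xf (fW G Xf) ≤ 1 := by
  rw [lW, fW, right_inl]
  simp only [toAdd_one, Int.natAbs_zero, Nat.cast_zero, zero_add]
  refine iSup_le fun n => ?_
  rw [left_inl]
  by_cases h1 : ∃ k : ℕ, n = (4:ℤ)^k
  · obtain ⟨k, rfl⟩ := h1
    rw [fB_pow]
    exact le_trans (lC_HX G Xf _) (lP_xg G Xf k)
  · by_cases h2 : n ≤ 0
    · rw [fB_nonpos G Xf h2]
      exact lC_sC G Xf
    · rw [fB_other G Xf h2 h1, lC_one]
      exact zero_le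

lemma lW_psi (i : ℕ) (g : G i) : lW G Xf (psi G i g) = (wordLength (Xf i) g : ℕ∞) := by
  rw [psi_apply, lW, right_inl]
  simp only [toAdd_one, Int.natAbs_zero, Nat.cast_zero, zero_add, left_inl]
  rw [iSup_eq_of _ (0:ℤ)]
  · rw [Pi.mulSingle_eq_same, lC, right_inl]
    simp only [toAdd_one, Int.natAbs_zero, Nat.cast_zero, zero_add, left_inl]
    rw [iSup_eq_of _ (1:ℤ)]
    · rw [Pi.mulSingle_eq_same, lP_single]
    · intro j hj
      rw [Pi.mulSingle_eq_of_ne hj, lP_one]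
  · intro j hj
    rw [Pi.mulSingle_eq_of_ne hj, lC_one]

lemma lW_word (hXf : ∀ i, Generates (Xf i)) (w : List (WW G)) (hw : ∀ a ∈ w, lW G Xf a ≤ 1) :
    lW G Xf w.prod ≤ (w.length : ℕ∞) := by
  induction w with
  | nil => simp [lW_one]
  | cons a l ih =>
      rw [List.prod_cons]
      refine le_trans (lW_mul G Xf hXf a l.prod) ?_
      have h1 := hw a (List.mem_cons_self)
      have h2 := ih fun b hb => hw b (List.mem_cons_of_mem a hb)
      calc lW G Xf a + lW G Xf l.prod ≤ 1 + (l.length : ℕ∞) := add_le_add h1 h2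
        _ = ((a :: l).length : ℕ∞) := by
            rw [List.length_cons]
            push_cast
            ring

end Length
section Reindex
noncomputable def reindexHom (T : Type*) [Group T] : (ℤ → T) →* (ℕ → T) where
  toFun f n := f ((Denumerable.eqv ℤ).symm n)
  map_one' := rfl
  map_mul' _ _ := rfl

lemma reindexHom_inj (T : Type*) [Group T] : Function.Injective (reindexHom T) := by
  intro f g h
  funext z
  have h2 := congrFun h (Denumerable.eqv ℤ z)
  simpa [reindexHom] using h2
end Reindex



theorem family_qi_frattini_embedding_into_two_generated_leftOrderable
    (G : ℕ → Type) [∀ i, Group (G i)] (hfg : ∀ i, Group.FG (G i))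
    (hlo : ∀ i, IsLeftOrderable (G i)) :
    ∃ (H : Type) (_ : Group H) (a b : H),
      Subgroup.closure {a, b} = ⊤ ∧ IsLeftOrderable H ∧
      ∀ i, ∃ (X : Finset (G i)) (Y : Finset H) (φ : G i →* H),
        Generates X ∧ Generates Y ∧ IsQIEmbedding X Y φ ∧ IsFrattini φ := by
  classical
  have hXf' : ∀ i, ∃ X : Finset (G i), Subgroup.closure (X : Set (G i)) = ⊤ := by
    intro i
    obtain ⟨S, hS, hfin⟩ := Group.fg_iff.mp (hfg i)
    exact ⟨hfin.toFinset, by rwa [Set.Finite.coe_toFinset]⟩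
  choose Xf hXf using hXf'
  choose Pos hPos using fun i => cone_of_isLeftOrderable (hlo i)
  set K : Subgroup (WW G) := KK G Xf with hK
  set tE : ↥K := ⟨tW G, tW_mem G Xf⟩ with htE
  set fE : ↥K := ⟨fW G Xf, fW_mem G Xf⟩ with hfE
  have hGenTop : Subgroup.closure ({tE, fE} : Set ↥K) = ⊤ := by
    have hpre : ((KK G Xf).subtype ⁻¹' {tW G, fW G Xf}) = ({tE, fE} : Set ↥K) := by
      ext x
      simp only [Set.mem_preimage, Subgroup.coe_subtype, Set.mem_insert_iff,
        Set.mem_singleton_iff]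
      constructor
      · rintro (h | h)
        · exact Or.inl (Subtype.ext h)
        · exact Or.inr (Subtype.ext h)
      · rintro (rfl | rfl) <;> simp [htE, hfE]
    rw [← hpre]
    exact Subgroup.closure_preimage_eq_top _
  have hLO : IsLeftOrderable ↥K := by
    have cP : IsCone (piCone Pos) := piCone_isCone Pos hPos
    set e1 := reindexHom (PP G) with he1d
    have he1 := reindexHom_inj (PP G)
    have cZP : IsCone (e1 ⁻¹' piCone (fun _ : ℕ => piCone Pos)) :=
      cone_preimage (piCone_isCone _ (fun _ => cP)) e1 he1
    have cCC : IsCone (sdCone (φ := shiftHom (PP G))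
        (e1 ⁻¹' piCone (fun _ : ℕ => piCone Pos)) {z : Multiplicative ℤ | 0 < z.toAdd}) :=
      sdCone_isCone cZP multIntCone
    set e2 := reindexHom (CC G) with he2d
    have he2 := reindexHom_inj (CC G)
    have cZC : IsCone (e2 ⁻¹' piCone (fun _ : ℕ => sdCone (φ := shiftHom (PP G))
        (e1 ⁻¹' piCone (fun _ : ℕ => piCone Pos)) {z : Multiplicative ℤ | 0 < z.toAdd})) :=
      cone_preimage (piCone_isCone _ (fun _ => cCC)) e2 he2
    have cWW : IsCone (sdCone (φ := shiftHom (CC G))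
        (e2 ⁻¹' piCone (fun _ : ℕ => sdCone (φ := shiftHom (PP G))
          (e1 ⁻¹' piCone (fun _ : ℕ => piCone Pos)) {z : Multiplicative ℤ | 0 < z.toAdd}))
        {z : Multiplicative ℤ | 0 < z.toAdd}) :=
      sdCone_isCone cZC multIntCone
    exact isLeftOrderable_of_cone
      (cone_preimage cWW K.subtype (fun a b h => Subtype.ext h))
  refine ⟨↥K, inferInstance, tE, fE, hGenTop, hLO, ?_⟩
  intro i
  set Y : Finset ↥K := {tE, fE} with hY
  have hYcoe : (Y : Set ↥K) = {tE, fE} := by simp [hY]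
  have hGenY : Generates Y := by
    rw [Generates, hYcoe]
    exact hGenTop
  set φ0 : G i →* ↥K :=
    (psi G i).codRestrict K (fun g => psi_mem_KK G Xf i (hXf i) g) with hφ0
  have hval : ∀ g : G i, (φ0 g : WW G) = psi G i g := fun g => rfl
  have hinj : Function.Injective φ0 := by
    intro a b h
    exact psi_inj G i (by rw [← hval a, ← hval b, h])
  -- lower bound (undistortedness)
  have hlower : ∀ g : G i, wordLength (Xf i) g ≤ wordLength Y (φ0 g) := by
    intro g
    obtain ⟨w, hw1, hw2, hw3⟩ := exists_word hGenY (φ0 g)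
    have hletters : ∀ a ∈ w.map K.subtype, lW G Xf a ≤ 1 := by
      intro a ha
      rw [List.mem_map] at ha
      obtain ⟨b, hb, rfl⟩ := ha
      have hone : ∀ c : ↥K, c = tE ∨ c = fE → lW G Xf (K.subtype c) ≤ 1 := by
        rintro c (rfl | rfl)
        · exact lW_tW G Xf
        · exact lW_fW G Xf
      rcases hw2 b hb with h | h
      · refine hone b ?_
        rw [hY] at h
        simpa using h
      · have h2 : lW G Xf (K.subtype b⁻¹) ≤ 1 := by
          refine hone b⁻¹ ?_
          rw [hY] at h
          simpa using h
        have h3 : K.subtype b = (K.subtype b⁻¹)⁻¹ := by simp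
        rw [h3]
        exact le_trans (lW_inv G Xf hXf _) h2
    have hbound := lW_word G Xf hXf (w.map K.subtype) hletters
    have hprod : (w.map K.subtype).prod = psi G i g := by
      rw [← map_list_prod, hw3]
      exact hval g
    rw [hprod, lW_psi G Xf i g, List.length_map, hw1] at hbound
    exact_mod_cast hbound
  -- upper bound
  set M : ℕ := (Xf i).sup (fun x => wordLength Y (φ0 x)) with hM
  have hupper : ∀ g : G i, wordLength Y (φ0 g) ≤ wordLength (Xf i) g * M := by
    intro g
    obtain ⟨w, hw1, hw2, hw3⟩ := exists_word (hXf i) g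
    have hmap : φ0 g = (w.map φ0).prod := by rw [← map_list_prod, hw3]
    rw [hmap]
    refine le_trans (wordLength_prod_le hGenY _) ?_
    have hx : ∀ x ∈ (w.map φ0).map (wordLength Y), x ≤ M := by
      intro x hx
      simp only [List.map_map, List.mem_map, Function.comp] at hx
      obtain ⟨a, ha, rfl⟩ := hx
      rcases hw2 a ha with h | h
      · exact Finset.le_sup (f := fun x => wordLength Y (φ0 x)) h
      · have h2 : wordLength Y (φ0 a) = wordLength Y (φ0 a⁻¹) := by
          rw [map_inv, wordLength_inv hGenY]
        rw [h2]
        exact Finset.le_sup (f := fun x => wordLength Y (φ0 x)) h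
    have hsum := List.sum_le_card_nsmul _ M hx
    simpa [List.length_map, hw1, smul_eq_mul] using hsum
  refine ⟨Xf i, Y, φ0, hXf i, hGenY, ⟨hinj, max (M:ℝ) 1, 1, ?_, one_pos, ?_⟩, ?_⟩
  · exact lt_of_lt_of_le one_pos (le_max_right _ _)
  · intro g
    have h1 : (wordLength (Xf i) g : ℝ) ≤ (wordLength Y (φ0 g) : ℝ) := by
      exact_mod_cast hlower g
    have h2 : (wordLength Y (φ0 g) : ℝ) ≤ (wordLength (Xf i) g : ℝ) * M := by
      exact_mod_cast hupper g
    have hC1 : (1:ℝ) ≤ max (M:ℝ) 1 := le_max_right _ _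
    have hMC : (M:ℝ) ≤ max (M:ℝ) 1 := le_max_left _ _
    have hx0 : (0:ℝ) ≤ (wordLength (Xf i) g : ℝ) := Nat.cast_nonneg _
    constructor
    · have hdiv : 1 / max (M:ℝ) 1 ≤ 1 := by
        rw [div_le_one (lt_of_lt_of_le one_pos hC1)]
        exact hC1
      have h3 : (1 / max (M:ℝ) 1) * (wordLength (Xf i) g : ℝ) ≤ (wordLength (Xf i) g : ℝ) := by
        nlinarith
      nlinarith
    · have h4 : (wordLength (Xf i) g : ℝ) * (M:ℝ) ≤ max (M:ℝ) 1 * (wordLength (Xf i) g : ℝ) := by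
        nlinarith
      nlinarith

  · exact ⟨hinj, fun a b => ⟨fun h => (φ0.map_isConj) h, fun h => by
      have h2 : IsConj (psi G i a) (psi G i b) := by
        have := (K.subtype.map_isConj) h
        rwa [Subgroup.coe_subtype] at this
      exact psi_conj_back G i h2⟩⟩
end

section
/- Let H be a finitely generated group with a surjection π from the free group on a finite set Y onto H and a computable left order ≤, let G be a countable group with an enumerated generating sequence x : ℕ → G, and let φ : G → H be a computable embedding. Then the left-invariant linear order on G obtained by pulling back ≤ along φ is computable with respect to x. -/
section Aux

open Computable

private theorem computable_flatMap {β γ : Type} [Primcodable β] [Primcodable γ]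
    {g : β → List γ} (hg : Computable g) :
    Computable (fun w : List β => (w.map g).flatten) := by
  have ho : Computable (fun a : List β × (ℕ × List γ) => a.1[a.2.1]?) :=
    Computable.list_getElem?.comp Computable.fst (Computable.fst.comp Computable.snd)
  have hstep : Computable₂ (fun (a : List β) (p : ℕ × List γ) =>
      Option.casesOn (a[p.1]?) p.2 (fun b => p.2 ++ g b) : List β → ℕ × List γ → List γ) := by
    have := Computable.option_casesOn (α := List β × (ℕ × List γ)) (β := β) (σ := List γ)
      ho (Computable.snd.comp Computable.snd)
      ((Computable.list_append.comp
        ((Computable.snd.comp Computable.snd).comp Computable.fst)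
        (hg.comp Computable.snd)).to₂)
    exact this.to₂
  have key : Computable (fun w : List β =>
      Nat.rec (motive := fun _ => List γ) ([] : List γ)
        (fun n acc => Option.casesOn (w[n]?) acc (fun b => acc ++ g b)) w.length) :=
    Computable.nat_rec Computable.list_length (Computable.const ([] : List γ)) hstep
  apply key.of_eq
  intro w
  have aux : ∀ n : ℕ, (Nat.rec (motive := fun _ => List γ) ([] : List γ)
      (fun n acc => Option.casesOn (w[n]?) acc (fun b => acc ++ g b)) n)
      = ((w.take n).map g).flatten := by
    intro n
    induction n with
    | zero => simp
    | succ n ih =>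
      have step : (Nat.rec (motive := fun _ => List γ) ([] : List γ)
          (fun n acc => Option.casesOn (w[n]?) acc (fun b => acc ++ g b)) (n+1))
          = Option.casesOn (w[n]?)
              (Nat.rec (motive := fun _ => List γ) ([] : List γ)
                (fun n acc => Option.casesOn (w[n]?) acc (fun b => acc ++ g b)) n)
              (fun b => (Nat.rec (motive := fun _ => List γ) ([] : List γ)
                (fun n acc => Option.casesOn (w[n]?) acc (fun b => acc ++ g b)) n)
                ++ g b) := rfl
      rw [step, ih, List.take_succ, List.map_append, List.flatten_append]
      cases h : w[n]? <;> simp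
  rw [aux w.length, List.take_of_length_le (le_refl _)]

end Aux

theorem pullback_order_computable_of_computable_embedding
    (H : Type) [Group H] (m : ℕ) (π : FreeGroup (Fin m) →* H)
    (hπ : Function.Surjective π) (l : LinearOrder H)
    (hl : ∀ a b c : H, l.le b c → l.le (a * b) (a * c))
    (hlc : Computable (fun w : List (Fin m × Bool) => orderSign l (π (FreeGroup.mk w))))
    (G : Type) [Group G] (x : ℕ → G) (hx : Subgroup.closure (Set.range x) = ⊤)
    (φ : G →* H) (hφ : Function.Injective φ) (hce : ComputableEmbedding x π φ)
    (lG : LinearOrder G) (hpull : ∀ a b : G, lG.le a b ↔ l.le (φ a) (φ b)) :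
    Computable (fun w : List (ℕ × Bool) => orderSign lG (evalWord x w)) := by
  obtain ⟨f, hf, hfπ⟩ := hce
  -- per-letter translation
  set g : ℕ × Bool → List (Fin m × Bool) :=
    fun p => if p.2 then f p.1 else FreeGroup.invRev (f p.1) with hg_def
  have hinvRev : Computable (fun L : List (Fin m × Bool) => FreeGroup.invRev L) := by
    have : Primrec (fun L : List (Fin m × Bool) =>
        (L.map (fun q => (q.1, !q.2))).reverse) :=
      Primrec.list_reverse.comp (Primrec.list_map Primrec.id
        ((Primrec.pair (Primrec.fst.comp Primrec.snd)
          (Primrec.not.comp (Primrec.snd.comp Primrec.snd)))))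
    exact this.to_comp.of_eq fun L => by simp [FreeGroup.invRev]
  have hg : Computable g :=
    (Computable.cond Computable.snd (hf.comp Computable.fst)
      (hinvRev.comp (hf.comp Computable.fst))).of_eq fun p => by
        by_cases h : p.2 <;> simp [hg_def, h]
  -- translation of whole words
  have hT : Computable (fun w : List (ℕ × Bool) => (w.map g).flatten) :=
    computable_flatMap hg
  -- the translated word evaluates to φ of the original evaluation
  have hEval : ∀ w : List (ℕ × Bool),
      π (FreeGroup.mk ((w.map g).flatten)) = φ (evalWord x w) := by
    intro w
    induction w with
    | nil =>
      show π (FreeGroup.mk []) = φ (evalWord x [])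
      have h1 : FreeGroup.mk ([] : List (Fin m × Bool)) = 1 := rfl
      rw [h1, map_one]
      unfold evalWord
      rw [List.map_nil, List.prod_nil, map_one]
    | cons p w ih =>
      have hsplit : FreeGroup.mk ((((p :: w).map g).flatten)) =
          FreeGroup.mk (g p) * FreeGroup.mk ((w.map g).flatten) := by
        rw [FreeGroup.mul_mk]; simp
      have hgp : π (FreeGroup.mk (g p)) = φ (if p.2 then x p.1 else (x p.1)⁻¹) := by
        by_cases hb : p.2
        · have hg1 : g p = f p.1 := by simp [hg_def, hb]
          rw [hg1, hfπ, if_pos hb]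
        · have hinv : FreeGroup.mk (FreeGroup.invRev (f p.1)) = (FreeGroup.mk (f p.1))⁻¹ :=
            FreeGroup.inv_mk.symm
          have hg1 : g p = FreeGroup.invRev (f p.1) := by simp [hg_def, hb]
          rw [hg1, hinv, map_inv, hfπ, if_neg hb, map_inv]
      have hev : evalWord x (p :: w) = (if p.2 then x p.1 else (x p.1)⁻¹) * evalWord x w := by
        simp [evalWord]
      rw [hsplit, map_mul, hgp, ih, hev, map_mul]
  have hsign : ∀ a : G, orderSign lG a = orderSign l (φ a) := by
    intro a
    have h1 : lG.lt a 1 ↔ l.lt (φ a) 1 := by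
      rw [lG.lt_iff_le_not_ge, l.lt_iff_le_not_ge, hpull, hpull, map_one]
    have h2 : a = 1 ↔ φ a = 1 :=
      ⟨fun h => by rw [h, map_one], fun h => hφ (by rw [h, map_one])⟩
    unfold orderSign
    by_cases hc1 : lG.lt a 1
    · rw [if_pos hc1, if_pos (h1.mp hc1)]
    · rw [if_neg hc1, if_neg (fun h => hc1 (h1.mpr h))]
      by_cases hc2 : a = 1
      · rw [if_pos hc2, if_pos (h2.mp hc2)]
      · rw [if_neg hc2, if_neg (fun h => hc2 (h2.mpr h))]
  exact (hlc.comp hT).of_eq fun w => by rw [hEval w]; exact (hsign _).symm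
end
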